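/- Let g be a totally symmetric third-order tensor on ℝ² with g₁₁₁(0) = 0 and g₁₂₂(0) = 0. Then g₁₁₁(±2π/3) = 3 g₁₂₂(±2π/3) = ±(3√3/8)(g₁₁₂(0) + g₂₂₂(0)), where g_{αβγ}(θ) denotes the components in the basis rotated by θ. -/

import Mathlib

noncomputable section

/-- The standard orthonormal basis of ℝ². -/
def e : Fin 2 → (Fin 2 → ℝ) := fun i => Pi.single i 1

/-- The basis rotated by angle θ: k'₁ = cos θ k₁ + sin θ k₂, k'₂ = -sin θ k₁ + cos θ k₂. -/
def krot (θ : ℝ) : Fin 2 → (Fin 2 → ℝ) := fun α =>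
  if α = 0 then Real.cos θ • e 0 + Real.sin θ • e 1
  else (-Real.sin θ) • e 0 + Real.cos θ • e 1

/-- Third-order tensors on ℝ² as trilinear maps. -/
abbrev Tri := (Fin 2 → ℝ) →ₗ[ℝ] (Fin 2 → ℝ) →ₗ[ℝ] (Fin 2 → ℝ) →ₗ[ℝ] ℝ

/-- Total symmetry: invariance under all permutations of the arguments. -/
def Sym3 (g : Tri) : Prop :=
  (∀ x y z, g x y z = g y x z) ∧ (∀ x y z, g x y z = g x z y)

/-- The components g_{αβγ}(θ) = g(k'_α, k'_β, k'_γ) in the basis rotated by θ. -/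
def comp (g : Tri) (θ : ℝ) (α β γ : Fin 2) : ℝ := g (krot θ α) (krot θ β) (krot θ γ)


/-- if g₁₁₁(0) = 0 and g₁₂₂(0) = 0, then
g₁₁₁(±2π/3) = 3 g₁₂₂(±2π/3) = ±(3√3/8)(g₁₁₂(0) + g₂₂₂(0)). -/
theorem stmt5 (g : Tri) (hg : Sym3 g)
    (h111 : comp g 0 0 0 0 = 0) (h122 : comp g 0 0 1 1 = 0) :
    comp g (2*Real.pi/3) 0 0 0 = 3 * comp g (2*Real.pi/3) 0 1 1 ∧
    comp g (2*Real.pi/3) 0 0 0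
      = (3*Real.sqrt 3/8) * (comp g 0 0 0 1 + comp g 0 1 1 1) ∧
    comp g (-(2*Real.pi/3)) 0 0 0 = 3 * comp g (-(2*Real.pi/3)) 0 1 1 ∧
    comp g (-(2*Real.pi/3)) 0 0 0
      = -((3*Real.sqrt 3/8) * (comp g 0 0 0 1 + comp g 0 1 1 1)) := by
  obtain ⟨h1, h2⟩ := hg
  set a := g (e 0) (e 0) (e 0) with ha
  set b := g (e 0) (e 0) (e 1) with hb
  set c := g (e 0) (e 1) (e 1) with hc
  set d := g (e 1) (e 1) (e 1) with hd
  have hb1 : g (e 0) (e 1) (e 0) = b := by rw [h2]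
  have hb2 : g (e 1) (e 0) (e 0) = b := by rw [h1, h2]
  have hc1 : g (e 1) (e 0) (e 1) = c := by rw [h1]
  have hc2 : g (e 1) (e 1) (e 0) = c := by rw [h2, h1]
  have key : ∀ θ : ℝ, comp g θ 0 0 0 =
      (Real.cos θ)^3*a + 3*(Real.cos θ)^2*Real.sin θ*b
        + 3*Real.cos θ*(Real.sin θ)^2*c + (Real.sin θ)^3*d := by
    intro θ
    simp only [comp, krot, if_pos rfl, if_true, if_false, map_add, map_smul, LinearMap.add_apply,
      LinearMap.smul_apply, smul_eq_mul, hb1, hb2, hc1, hc2, ← ha, ← hb, ← hc, ← hd]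
    ring
  have key2 : ∀ θ : ℝ, comp g θ 0 1 1 =
      Real.cos θ*(Real.sin θ)^2*a + ((Real.sin θ)^3 - 2*Real.sin θ*(Real.cos θ)^2)*b
        + ((Real.cos θ)^3 - 2*Real.cos θ*(Real.sin θ)^2)*c + Real.sin θ*(Real.cos θ)^2*d := by
    intro θ
    simp only [comp, krot, if_pos rfl, if_neg (by decide : (1 : Fin 2) ≠ 0), if_true, if_false,
      map_add, map_smul, LinearMap.add_apply, LinearMap.smul_apply, smul_eq_mul,
      hb1, hb2, hc1, hc2, ← ha, ← hb, ← hc, ← hd]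
    ring
  have k0 : krot 0 0 = e 0 := by simp [krot]
  have k1 : krot 0 1 = e 1 := by simp [krot]
  have haz : a = 0 := by simpa [comp, k0] using h111
  have hcz : c = 0 := by simpa [comp, k0, k1] using h122
  have hb0 : comp g 0 0 0 1 = b := by simp [comp, k0, k1]; rfl
  have hd0 : comp g 0 1 1 1 = d := by simp [comp, k0, k1]; rfl
  have hcv : Real.cos (2*Real.pi/3) = -(1/2) := by
    rw [show (2*Real.pi/3 : ℝ) = Real.pi - Real.pi/3 by ring, Real.cos_pi_sub,
      Real.cos_pi_div_three]
  have hsv : Real.sin (2*Real.pi/3) = Real.sqrt 3 / 2 := by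
    rw [show (2*Real.pi/3 : ℝ) = Real.pi - Real.pi/3 by ring, Real.sin_pi_sub,
      Real.sin_pi_div_three]
  have hs3 : Real.sqrt 3 ^ 2 = 3 := Real.sq_sqrt (by norm_num)
  rw [hb0, hd0, key, key2, key, key2, Real.cos_neg, Real.sin_neg, hcv, hsv, haz, hcz]
  refine ⟨by linear_combination (Real.sqrt 3/8*(d - 3*b)) * hs3,
    by linear_combination (Real.sqrt 3*d/8) * hs3,
    by linear_combination (Real.sqrt 3/8*(3*b - d)) * hs3,
    by linear_combination (-(Real.sqrt 3*d/8)) * hs3⟩
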